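/- Let O be a finite set of pairwise commuting n-qubit Pauli observables, each different from I^⊗n, and B ⊆ O a maximally independent subset. Define a : O → {−1,1} by t = a(t)·∏_{s∈A_t} s, where A_t is the unique nonempty subset of B whose product equals ±t. Then for every subset c ⊆ O whose product satisfies ∏_{t∈c} t = s(c)·I^⊗n with s(c) ∈ {−1,1}, one has ∏_{t∈c} a(t) = s(c). -/

import Mathlib

open scoped Classical
open Matrix

noncomputable section

/-- The space of `n`-qubit operators, realized as matrices indexed by
`Fin n → Fin 2` (the `n`-fold tensor-product index). -/
abbrev QMat (n : ℕ) := Matrix (Fin n → Fin 2) (Fin n → Fin 2) ℂ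

/-- The four Pauli matrices `I, X, Y, Z`. -/
def pauliMat : Fin 4 → Matrix (Fin 2) (Fin 2) ℂ
  | ⟨0, _⟩ => 1
  | ⟨1, _⟩ => !![0, 1; 1, 0]
  | ⟨2, _⟩ => !![0, -Complex.I; Complex.I, 0]
  | ⟨3, _⟩ => !![1, 0; 0, -1]

/-- The `n`-fold Kronecker (tensor) product `G₁ ⊗ ⋯ ⊗ Gₙ` of the Pauli matrices
selected by `g : Fin n → Fin 4`, as a matrix indexed by `Fin n → Fin 2`. -/
def nPauli {n : ℕ} (g : Fin n → Fin 4) : QMat n :=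
  Matrix.of fun r c => ∏ k, pauliMat (g k) (r k) (c k)

/-- `M` is an `n`-qubit Pauli observable. -/
def IsPauliObs (n : ℕ) (M : QMat n) : Prop := ∃ g : Fin n → Fin 4, M = nPauli g

/-- `I^⊗n`, the `n`-fold tensor product of the identity. -/
def idN (n : ℕ) : QMat n := nPauli (fun _ => ⟨0, by omega⟩)

/-- Product of `f` over a finite set of naturals, taken in increasing order
(well-defined without commutativity; agrees with the unordered product when the
factors pairwise commute). -/
def natFinsetProd {M : Type*} [Monoid M] (s : Finset ℕ) (f : ℕ → M) : M :=
  ((s.sort (· ≤ ·)).map f).prod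

/-- `(V,H,G)` is a hypergram: `V` a nonempty finite vertex set, `H` a set of
nonempty hyperedges covering `V`, `G` a set of 2-element edges on `V` forming a
simple reduced graph, no edge of `G` being contained in a hyperedge of `H`. -/
def IsHypergram (V : Finset ℕ) (H G : Finset (Finset ℕ)) : Prop :=
  V.Nonempty ∧
  (∀ h ∈ H, h ⊆ V ∧ h.Nonempty) ∧
  (∀ v ∈ V, ∃ h ∈ H, v ∈ h) ∧
  (∀ e ∈ G, e ⊆ V ∧ e.card = 2) ∧
  (∀ v ∈ V, ∃ e ∈ G, v ∈ e) ∧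
  (∀ v ∈ V, ∀ w ∈ V,
    (∀ u ∈ V, (({v, u} : Finset ℕ) ∈ G ↔ ({w, u} : Finset ℕ) ∈ G)) → v = w) ∧
  (∀ e ∈ G, ∀ h ∈ H, ¬ e ⊆ h)

/-- `α` is an `n`-qubit Pauli assignment of the hypergram `(V,H,G)`. -/
def IsPauliAssignment (V : Finset ℕ) (H G : Finset (Finset ℕ)) (n : ℕ)
    (α : ℕ → QMat n) : Prop :=
  (∀ v ∈ V, IsPauliObs n (α v)) ∧
  (∀ v ∈ V, α v ≠ idN n) ∧
  (∀ v₁ ∈ V, ∀ v₂ ∈ V, α v₁ = α v₂ → v₁ = v₂) ∧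
  (∀ v₁ ∈ V, ∀ v₂ ∈ V, v₁ ≠ v₂ →
    (α v₁ * α v₂ = -(α v₂ * α v₁) ↔ ({v₁, v₂} : Finset ℕ) ∈ G)) ∧
  (∀ h ∈ H, natFinsetProd h α = idN n ∨ natFinsetProd h α = -(idN n))

/-- The sign `sgn_α(h) ∈ {−1,1}` of a hyperedge `h`: `∏_{v∈h} α(v) = sgn_α(h)·I^⊗n`. -/
def quantumSgn {n : ℕ} (α : ℕ → QMat n) (h : Finset ℕ) : ℤ :=
  if natFinsetProd h α = idN n then 1 else -1

/-- The sign `sgn_a(h) = ∏_{v∈h} a(v)` of a hyperedge for a classical assignment. -/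
def classicalSgn (a : ℕ → ℤ) (h : Finset ℕ) : ℤ := ∏ v ∈ h, a v

/-- The contextuality degree of a Pauli assignment: the minimum over classical
assignments `a : V → {−1,1}` of the number of hyperedges whose signs differ. -/
def contextualityDegree {n : ℕ} (H : Finset (Finset ℕ)) (α : ℕ → QMat n) : ℕ :=
  sInf { d : ℕ | ∃ a : ℕ → ℤ, (∀ v, a v = 1 ∨ a v = -1) ∧
    d = (H.filter (fun h => quantumSgn α h ≠ classicalSgn a h)).card }

/-- The context (incidence) matrix of a hypergram over 𝔽₂. -/
def contextMatrix (V : Finset ℕ) (H : Finset (Finset ℕ)) :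
    Matrix {h // h ∈ H} {v // v ∈ V} (ZMod 2) :=
  Matrix.of fun h v => if v.1 ∈ h.1 then 1 else 0

/-- The anticommutation (adjacency) matrix of a hypergram over 𝔽₂. -/
def anticommMatrix (V : Finset ℕ) (G : Finset (Finset ℕ)) :
    Matrix {v // v ∈ V} {v // v ∈ V} (ZMod 2) :=
  Matrix.of fun i j => if ({i.1, j.1} : Finset ℕ) ∈ G then 1 else 0

/-- The standard symplectic form on `𝔽₂^{2n}`:
`⟨x,y⟩ = Σ_{k=1}^{n} (x_{2k−1} y_{2k} + x_{2k} y_{2k−1})`. -/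
def sympForm (n : ℕ) (x y : Fin (2 * n) → ZMod 2) : ZMod 2 :=
  ∑ k : Fin n,
    (x ⟨2 * k.1, by have := k.2; omega⟩ * y ⟨2 * k.1 + 1, by have := k.2; omega⟩ +
     x ⟨2 * k.1 + 1, by have := k.2; omega⟩ * y ⟨2 * k.1, by have := k.2; omega⟩)

/-- The single-qubit encoding `ψ(I)=(0,0), ψ(X)=(0,1), ψ(Y)=(1,1), ψ(Z)=(1,0)`. -/
def psi4 : Fin 4 → (ZMod 2) × (ZMod 2)
  | ⟨0, _⟩ => (0, 0)
  | ⟨1, _⟩ => (0, 1)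
  | ⟨2, _⟩ => (1, 1)
  | ⟨3, _⟩ => (1, 0)

/-- The encoding `ψ` of an `n`-qubit Pauli observable (given by its tensor
factors `g`) as a vector of `𝔽₂^{2n}`, concatenating the per-factor encodings. -/
def psiVec {n : ℕ} (g : Fin n → Fin 4) : Fin (2 * n) → ZMod 2 := fun idx =>
  if idx.1 % 2 = 0 then (psi4 (g ⟨idx.1 / 2, by have := idx.2; omega⟩)).1
  else (psi4 (g ⟨idx.1 / 2, by have := idx.2; omega⟩)).2

/-- All pairs of elements of `S` commute. -/
def PairComm {n : ℕ} (S : Finset (QMat n)) : Prop := ∀ a ∈ S, ∀ b ∈ S, a * b = b * a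

/-- The (well-defined) product of a finite set of pairwise commuting matrices. -/
def commProd {n : ℕ} (S : Finset (QMat n)) (h : PairComm S) : QMat n :=
  S.noncommProd id (fun a ha b hb _ => h a ha b hb)

/-- Pairwise commutation is inherited by subsets. -/
def pairCommOfSubset {n : ℕ} {S T : Finset (QMat n)} (hST : S ⊆ T) (h : PairComm T) :
    PairComm S := fun a ha b hb => h a (hST ha) b (hST hb)

/-- `Q` (pairwise commuting) is independent: no nonempty subset has product `±I^⊗n`. -/
def IsIndep {n : ℕ} (Q : Finset (QMat n)) (hQ : PairComm Q) : Prop :=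
  ∀ S : Finset (QMat n), ∀ (hS : S ⊆ Q), S.Nonempty →
    commProd S (pairCommOfSubset hS hQ) ≠ idN n ∧
    commProd S (pairCommOfSubset hS hQ) ≠ -(idN n)

/-- The vertex set `{1, …, 15}`. -/
def V15 : Finset ℕ := Finset.Icc 1 15

/-- The 15 lines of the doily. -/
def doilyLines : Finset (Finset ℕ) :=
  { {1,2,3}, {1,8,9}, {1,10,11}, {2,4,6}, {2,5,7}, {3,12,15}, {3,13,14},
    {4,8,12}, {4,10,14}, {5,8,13}, {5,10,15}, {6,9,15}, {6,11,13},
    {7,9,14}, {7,11,12} }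

/-- The 10 lines of the two-spread `H_{2s}`. -/
def twoSpreadLines : Finset (Finset ℕ) :=
  { {1,2,3}, {1,10,11}, {2,4,6}, {3,13,14}, {4,8,12}, {5,8,13}, {5,10,15},
    {6,9,15}, {7,9,14}, {7,11,12} }

/-- The anticommutation graph `G_d = G_{2s}`: pairs of distinct vertices not on a
common doily line. -/
def doilyG : Finset (Finset ℕ) :=
  (V15.powersetCard 2).filter (fun e => ∀ h ∈ doilyLines, ¬ e ⊆ h)


open scoped symmDiff

lemma pauli_sq (x : Fin 4) : pauliMat x * pauliMat x = 1 := by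
  fin_cases x <;> simp [pauliMat] <;>
    ext i j <;> fin_cases i <;> fin_cases j <;>
      simp [Matrix.mul_apply, Fin.sum_univ_two, Matrix.one_apply, Complex.I_mul_I]

lemma nPauli_mul {n : ℕ} (g g' : Fin n → Fin 4) :
    nPauli g * nPauli g' =
      Matrix.of fun r c => ∏ k, (pauliMat (g k) * pauliMat (g' k)) (r k) (c k) := by
  ext r c
  simp only [nPauli, Matrix.mul_apply, Matrix.of_apply]
  simp only [Matrix.mul_apply, Fintype.prod_sum (fun x j => pauliMat (g x) (r x) j * pauliMat (g' x) j (c x))]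
  simp [Finset.prod_mul_distrib]

lemma nPauli_sq {n : ℕ} (g : Fin n → Fin 4) : nPauli g * nPauli g = idN n := by
  rw [nPauli_mul, idN]
  have h0 : pauliMat ⟨0, by omega⟩ = 1 := rfl
  simp only [pauli_sq, nPauli, h0]

lemma idN_eq_one (n : ℕ) : idN n = 1 := by
  ext r c
  by_cases h : r = c
  · subst h; simp [idN, nPauli, pauliMat, Matrix.one_apply]
  · obtain ⟨k, hk⟩ := Function.ne_iff.mp h
    simp only [idN, nPauli, Matrix.of_apply, Matrix.one_apply, if_neg h]
    exact Finset.prod_eq_zero (Finset.mem_univ k) (by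
      simp [pauliMat, Matrix.one_apply, hk])

section CommProdAux
variable {n : ℕ}

lemma commProd_congr {S T : Finset (QMat n)} (h : S = T) (hS : PairComm S) (hT : PairComm T) :
    commProd S hS = commProd T hT := by subst h; rfl

lemma commProd_insert {S : Finset (QMat n)} {t : QMat n} (h : PairComm (insert t S)) (ht : t ∉ S) :
    commProd (insert t S) h
      = t * commProd S (pairCommOfSubset (Finset.subset_insert t S) h) := by
  exact
    Finset.noncommProd_insert_of_notMem S t id (fun a ha b hb _ => h a ha b hb) ht

lemma commute_commProd {S : Finset (QMat n)} (h : PairComm S) (x : QMat n)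
    (hx : ∀ b ∈ S, Commute x b) : Commute x (commProd S h) :=
  Finset.noncommProd_commute S id _ x hx

lemma commProd_sq : ∀ (S : Finset (QMat n)) (h : PairComm S),
    (∀ b ∈ S, b * b = 1) → commProd S h * commProd S h = 1 := by
  intro S
  induction S using Finset.induction_on with
  | empty => intro _ _; exact mul_one _
  | @insert t S ht ih =>
    intro h hsq
    rw [commProd_insert h ht]
    set hS := pairCommOfSubset (Finset.subset_insert t S) h
    have hc : Commute (commProd S hS) t :=
      (commute_commProd hS t (fun b hb =>
        h t (Finset.mem_insert_self t S) b (Finset.mem_insert_of_mem hb))).symm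
    rw [hc.mul_mul_mul_comm, hsq t (Finset.mem_insert_self t S),
      ih hS (fun b hb => hsq b (Finset.mem_insert_of_mem hb)), one_mul]

lemma commProd_union {S T : Finset (QMat n)} (hd : Disjoint S T) (h : PairComm (S ∪ T)) :
    commProd (S ∪ T) h
      = commProd S (pairCommOfSubset Finset.subset_union_left h)
        * commProd T (pairCommOfSubset Finset.subset_union_right h) :=
  Finset.noncommProd_union_of_disjoint hd id _

lemma commProd_mul {B : Finset (QMat n)} (hB : PairComm B) (hsq : ∀ b ∈ B, b * b = 1)
    {S T : Finset (QMat n)} (hS : S ⊆ B) (hT : T ⊆ B) :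
    commProd S (pairCommOfSubset hS hB) * commProd T (pairCommOfSubset hT hB)
      = commProd (S ∆ T)
          (pairCommOfSubset (le_trans symmDiff_le_sup (Finset.union_subset hS hT)) hB) := by
  have hST : S ∩ T ⊆ B := fun x hx => hS (Finset.mem_of_mem_inter_left hx)
  have e1 : S = (S \ T) ∪ (S ∩ T) := (Finset.sdiff_union_inter S T).symm
  have e2 : T = (T \ S) ∪ (S ∩ T) := by
    rw [Finset.inter_comm]; exact (Finset.sdiff_union_inter T S).symm
  have hSd : S \ T ⊆ B := fun x hx => hS (Finset.sdiff_subset hx)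
  have hTd : T \ S ⊆ B := fun x hx => hT (Finset.sdiff_subset hx)
  have cS : commProd S (pairCommOfSubset hS hB)
      = commProd (S \ T) (pairCommOfSubset hSd hB)
        * commProd (S ∩ T) (pairCommOfSubset hST hB) := by
    rw [commProd_congr e1 _ (pairCommOfSubset (e1 ▸ hS) hB),
      commProd_union (Finset.disjoint_sdiff_inter S T) _]
  have cT : commProd T (pairCommOfSubset hT hB)
      = commProd (T \ S) (pairCommOfSubset hTd hB)
        * commProd (S ∩ T) (pairCommOfSubset hST hB) := by
    rw [commProd_congr e2 _ (pairCommOfSubset (e2 ▸ hT) hB),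
      commProd_union (Finset.disjoint_sdiff_inter T S |>.mono_right (by rw [Finset.inter_comm])) _]
  have hcomm2 : ∀ (U V : Finset (QMat n)) (hU : U ⊆ B) (hV : V ⊆ B),
      Commute (commProd U (pairCommOfSubset hU hB)) (commProd V (pairCommOfSubset hV hB)) := by
    intro U V hU hV
    exact commute_commProd _ _ (fun b hb =>
      ((commute_commProd _ b (fun x hx => hB b (hV hb) x (hU hx))).symm))
  rw [cS, cT]
  have hQ := hcomm2 (S ∩ T) (T \ S) hST hTd
  rw [mul_assoc, ← mul_assoc (commProd (S ∩ T) (pairCommOfSubset hST hB)), hQ.eq,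
    mul_assoc, commProd_sq _ _ (fun b hb => hsq b (hST hb)), mul_one,
    ← commProd_union disjoint_sdiff_sdiff
      (pairCommOfSubset (Finset.union_subset hSd hTd) hB)]
  exact commProd_congr (show S \ T ∪ T \ S = S ∆ T by
    rw [symmDiff_def, Finset.sup_eq_union]) _ _

end CommProdAux

/-- The classical assignment `a` defined from a maximally
independent subset `B` by `t = a(t)·∏_{s∈A_t} s` satisfies all sign constraints:
`∏_{t∈c} a(t) = s(c)` whenever `∏_{t∈c} t = s(c)·I^⊗n`. -/
theorem basis_classical_assignment_satisfies_signs
    (n : ℕ) (O : Finset (QMat n))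
    (hObs : ∀ o ∈ O, IsPauliObs n o)
    (hneI : ∀ o ∈ O, o ≠ idN n)
    (hcomm : PairComm O)
    (B : Finset (QMat n)) (hBsub : B ⊆ O)
    (hBindep : IsIndep B (pairCommOfSubset hBsub hcomm))
    (hBmax : ∀ t (ht : t ∈ O), t ∉ B →
      ¬ IsIndep (insert t B) (pairCommOfSubset (Finset.insert_subset ht hBsub) hcomm))
    (a : QMat n → ℤ)
    (ha : ∀ t ∈ O, a t = 1 ∨ a t = -1)
    (hdec : ∀ t ∈ O, ∃ (A : Finset (QMat n)) (hA : A ⊆ B), A.Nonempty ∧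
      t = (a t : ℂ) • commProd A (pairCommOfSubset (hA.trans hBsub) hcomm)) :
    ∀ c (hc : c ⊆ O) (s : ℤ), (s = 1 ∨ s = -1) →
      commProd c (pairCommOfSubset hc hcomm) = (s : ℂ) • idN n →
      (∏ t ∈ c, a t) = s := by
  intro c hc s hs hprod
  have hBc : PairComm B := pairCommOfSubset hBsub hcomm
  have hsq : ∀ b ∈ B, b * b = 1 := by
    intro b hb
    obtain ⟨g, rfl⟩ := hObs b (hBsub hb)
    rw [nPauli_sq, idN_eq_one]
  have key : ∀ c' (hc' : c' ⊆ O), ∃ (S : Finset (QMat n)) (hS : S ⊆ B),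
      commProd c' (pairCommOfSubset hc' hcomm)
        = ((∏ t ∈ c', a t : ℤ) : ℂ) • commProd S (pairCommOfSubset hS hBc) := by
    intro c'
    induction c' using Finset.induction_on with
    | empty =>
      intro _
      exact ⟨∅, Finset.empty_subset _, by simp [commProd]⟩
    | @insert t c' htc ih =>
      intro hc'
      have htO : t ∈ O := hc' (Finset.mem_insert_self _ _)
      obtain ⟨S, hS, hrec⟩ := ih ((Finset.subset_insert t c').trans hc')
      obtain ⟨A, hA, hAne, hAdec⟩ := hdec t htO
      refine ⟨A ∆ S, le_trans symmDiff_le_sup (Finset.union_subset hA hS), ?_⟩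
      rw [commProd_insert _ htc]
      rw [show commProd c' (pairCommOfSubset (Finset.subset_insert t c') (pairCommOfSubset hc' hcomm))
          = ((∏ t ∈ c', a t : ℤ) : ℂ) • commProd S (pairCommOfSubset hS hBc) from hrec]
      rw [Finset.prod_insert htc]
      conv_lhs => rw [hAdec]
      rw [smul_mul_assoc, mul_smul_comm, smul_smul,
        show commProd A (pairCommOfSubset (hA.trans hBsub) hcomm)
          = commProd A (pairCommOfSubset hA hBc) from rfl,
        commProd_mul hBc hsq hA hS]
      push_cast
      ring_nf
  obtain ⟨S, hS, hkey⟩ := key c hc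
  set p : ℤ := ∏ t ∈ c, a t with hpdef
  have hp : p = 1 ∨ p = -1 := by
    refine Finset.prod_induction a (fun z => z = 1 ∨ z = -1) ?_ (Or.inl rfl)
      (fun x hx => ha x (hc hx))
    rintro x y (rfl | rfl) (rfl | rfl) <;> norm_num
  have heq : ((p : ℤ) : ℂ) • commProd S (pairCommOfSubset hS hBc) = (s : ℂ) • idN n := by
    rw [← hkey, hprod]
  have hps : commProd S (pairCommOfSubset hS hBc) = ((p * s : ℤ) : ℂ) • idN n := by
    rcases hp with hp1 | hp1 <;>
      rw [hp1] at heq ⊢ <;> push_cast at heq ⊢ <;>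
        simp only [one_smul, neg_smul, neg_mul, one_mul, neg_neg] at heq ⊢
    · exact heq
    · rw [← heq, neg_neg]
  rcases Finset.eq_empty_or_nonempty S with rfl | hSne
  · have h1 : (1 : QMat n) = ((p * s : ℤ) : ℂ) • idN n := by
      rw [← hps]; rfl
    rw [idN_eq_one] at h1
    have h2 := congrFun (congrFun (congrArg (fun M : QMat n => M) h1) (fun _ => 0)) (fun _ => 0)
    simp only [Matrix.smul_apply, Matrix.one_apply_eq, smul_eq_mul, mul_one] at h2
    have h3 : ((1 : ℤ) : ℂ) = ((p * s : ℤ) : ℂ) := by push_cast; push_cast at h2; linear_combination h2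
    have h4 : (1 : ℤ) = p * s := by exact_mod_cast h3
    rcases hs with rfl | rfl
    · simpa using h4.symm
    · omega
  · exfalso
    have hind := hBindep S hS hSne
    have hps1 : p * s = 1 ∨ p * s = -1 := by
      rcases hp with h1 | h1 <;> rcases hs with h2 | h2 <;> simp [h1, h2]
    rcases hps1 with h1 | h1
    · exact hind.1 (by rw [hps, h1]; push_cast; rw [one_smul])
    · exact hind.2 (by rw [hps, h1]; push_cast; rw [neg_smul, one_smul])
  

end
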